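/- For probability density functions p and q on a measure space and any s with 0 < s < 1/2, the relative Rényi entropy I^s(p‖q) := -log ∫ p(ω)^s q(ω)^{1-s} dω satisfies 2s · I^{1/2}(p‖q) ≤ I^s(p‖q). -/

import Mathlib

open MeasureTheory Real
open scoped ENNReal

private lemma meas_rpow' {Ω : Type*} [MeasurableSpace Ω] {p : Ω → ℝ}
    (hp : Measurable p) (c : ℝ) : Measurable fun ω => p ω ^ c := by
  measurability

theorem renyi_lower_bound {Ω : Type*} [MeasurableSpace Ω] (μ : Measure Ω)
    (p q : Ω → ℝ) (hp : Measurable p) (hq : Measurable q)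
    (hp0 : ∀ ω, 0 ≤ p ω) (hq0 : ∀ ω, 0 ≤ q ω)
    (hpi : ∫ ω, p ω ∂μ = 1) (hqi : ∫ ω, q ω ∂μ = 1)
    (s : ℝ) (hs : 0 < s) (hs' : s < 1/2) :
    2 * s * (-Real.log (∫ ω, p ω ^ (1/2 : ℝ) * q ω ^ (1/2 : ℝ) ∂μ))
      ≤ -Real.log (∫ ω, p ω ^ s * q ω ^ (1 - s) ∂μ) := by
  have h2s : 0 < 2 * s := by linarith
  have h2s1 : 2 * s < 1 := by linarith
  have hs1 : 0 ≤ 1 - s := by linarith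
  -- integrability of p and q
  have hpint : Integrable p μ := by
    by_contra h
    rw [integral_undef h] at hpi; norm_num at hpi
  have hqint : Integrable q μ := by
    by_contra h
    rw [integral_undef h] at hqi; norm_num at hqi
  set P : Ω → ℝ≥0∞ := fun ω => ENNReal.ofReal (p ω) with hP
  set Q : Ω → ℝ≥0∞ := fun ω => ENNReal.ofReal (q ω) with hQ
  have hPm : Measurable P := hp.ennreal_ofReal
  have hQm : Measurable Q := hq.ennreal_ofReal
  have hPl : ∫⁻ ω, P ω ∂μ = 1 := by
    rw [hP]
    rw [← ofReal_integral_eq_lintegral_ofReal hpint (ae_of_all _ hp0), hpi,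
      ENNReal.ofReal_one]
  have hQl : ∫⁻ ω, Q ω ∂μ = 1 := by
    rw [hQ]
    rw [← ofReal_integral_eq_lintegral_ofReal hqint (ae_of_all _ hq0), hqi,
      ENNReal.ofReal_one]
  set L1 : ℝ≥0∞ := ∫⁻ ω, P ω ^ (1/2 : ℝ) * Q ω ^ (1/2 : ℝ) ∂μ with hL1
  set L2 : ℝ≥0∞ := ∫⁻ ω, P ω ^ s * Q ω ^ (1 - s) ∂μ with hL2
  -- L1 ≤ 1 by Cauchy-Schwarz
  have hL1le : L1 ≤ 1 := by
    have hconj : (2 : ℝ).HolderConjugate 2 := Real.holderConjugate_iff.mpr ⟨one_lt_two, by norm_num⟩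
    have := ENNReal.lintegral_mul_le_Lp_mul_Lq μ hconj
      (f := fun ω => P ω ^ (1/2 : ℝ)) (g := fun ω => Q ω ^ (1/2 : ℝ))
      (hPm.pow_const _).aemeasurable (hQm.pow_const _).aemeasurable
    simp only [Pi.mul_apply] at this
    calc L1 ≤ (∫⁻ ω, (P ω ^ (1/2:ℝ)) ^ (2:ℝ) ∂μ) ^ (1/2:ℝ) *
        (∫⁻ ω, (Q ω ^ (1/2:ℝ)) ^ (2:ℝ) ∂μ) ^ (1/2:ℝ) := this
      _ = 1 := by
        simp only [← ENNReal.rpow_mul]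
        norm_num
        rw [hPl, hQl]
        simp
  have hL1ne : L1 ≠ ⊤ := (lt_of_le_of_lt hL1le (by norm_num)).ne
  -- Hölder: L2 ≤ L1 ^ (2s)
  have hholder : L2 ≤ L1 ^ (2 * s) := by
    have hconj : (1 / (2 * s) : ℝ).HolderConjugate (1 / (1 - 2 * s)) := by
      rw [Real.holderConjugate_iff]
      constructor
      · rw [lt_div_iff₀ h2s]; linarith
      · rw [one_div, one_div, inv_inv, inv_inv]; ring
    have := ENNReal.lintegral_mul_le_Lp_mul_Lq μ hconj
      (f := fun ω => P ω ^ s * Q ω ^ s) (g := fun ω => Q ω ^ (1 - 2 * s))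
      ((hPm.pow_const _).mul (hQm.pow_const _)).aemeasurable
      (hQm.pow_const _).aemeasurable
    simp only [Pi.mul_apply] at this
    have heq1 : ∀ ω, P ω ^ s * Q ω ^ s * Q ω ^ (1 - 2 * s) = P ω ^ s * Q ω ^ (1 - s) := by
      intro ω
      have he : s + (1 - 2 * s) = 1 - s := by ring
      rw [mul_assoc, ← ENNReal.rpow_add_of_nonneg _ _ hs.le (by linarith), he]
    have heq2 : ∀ ω, (P ω ^ s * Q ω ^ s) ^ (1 / (2 * s) : ℝ)
        = P ω ^ (1/2 : ℝ) * Q ω ^ (1/2 : ℝ) := by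
      intro ω
      have he : s * (1 / (2 * s)) = 1 / 2 := by field_simp
      rw [ENNReal.mul_rpow_of_nonneg _ _ (by positivity), ← ENNReal.rpow_mul,
        ← ENNReal.rpow_mul, he]
    have heq3 : ∀ ω, (Q ω ^ (1 - 2 * s)) ^ (1 / (1 - 2 * s) : ℝ) = Q ω := by
      intro ω
      rw [← ENNReal.rpow_mul]
      rw [mul_one_div_cancel (by linarith : (1 : ℝ) - 2 * s ≠ 0), ENNReal.rpow_one]
    calc L2 = ∫⁻ ω, P ω ^ s * Q ω ^ s * Q ω ^ (1 - 2 * s) ∂μ := by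
          simp_rw [heq1]; rfl
      _ ≤ (∫⁻ ω, (P ω ^ s * Q ω ^ s) ^ (1 / (2 * s) : ℝ) ∂μ) ^ (1 / (1 / (2 * s)) : ℝ) *
          (∫⁻ ω, (Q ω ^ (1 - 2 * s)) ^ (1 / (1 - 2 * s) : ℝ) ∂μ) ^ (1 / (1 / (1 - 2 * s)) : ℝ)
          := this
      _ = L1 ^ (2 * s) := by
        simp_rw [heq2, heq3]
        rw [hQl, one_div_one_div, one_div_one_div, ENNReal.one_rpow, mul_one]
  have hL2ne : L2 ≠ ⊤ := by
    refine (lt_of_le_of_lt hholder ?_).ne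
    exact ENNReal.rpow_lt_top_of_nonneg h2s.le hL1ne
  -- convert Bochner integrals to lintegrals
  have hib1 : (∫ ω, p ω ^ (1/2 : ℝ) * q ω ^ (1/2 : ℝ) ∂μ) = L1.toReal := by
    rw [integral_eq_lintegral_of_nonneg_ae
      (ae_of_all _ fun ω => mul_nonneg (Real.rpow_nonneg (hp0 ω) _) (Real.rpow_nonneg (hq0 ω) _))
      (((meas_rpow' hp _).mul (meas_rpow' hq _)).aestronglyMeasurable)]
    congr 1
    refine lintegral_congr fun ω => ?_
    rw [ENNReal.ofReal_mul (Real.rpow_nonneg (hp0 ω) _), ← ENNReal.ofReal_rpow_of_nonneg (hp0 ω) (by norm_num),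
      ← ENNReal.ofReal_rpow_of_nonneg (hq0 ω) (by norm_num)]
  have hib2 : (∫ ω, p ω ^ s * q ω ^ (1 - s) ∂μ) = L2.toReal := by
    rw [integral_eq_lintegral_of_nonneg_ae
      (ae_of_all _ fun ω => mul_nonneg (Real.rpow_nonneg (hp0 ω) _) (Real.rpow_nonneg (hq0 ω) _))
      (((meas_rpow' hp _).mul (meas_rpow' hq _)).aestronglyMeasurable)]
    congr 1
    refine lintegral_congr fun ω => ?_
    rw [ENNReal.ofReal_mul (Real.rpow_nonneg (hp0 ω) _), ← ENNReal.ofReal_rpow_of_nonneg (hp0 ω) hs.le,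
      ← ENNReal.ofReal_rpow_of_nonneg (hq0 ω) hs1]
  rw [hib1, hib2]
  set A := L1.toReal with hA
  set B := L2.toReal with hB
  have hA1 : A ≤ 1 := by
    rw [hA]
    exact ENNReal.toReal_le_of_le_ofReal zero_le_one (by simpa using hL1le)
  have hBA : B ≤ A ^ (2 * s) := by
    rw [hA, hB, ENNReal.toReal_rpow]
    exact ENNReal.toReal_mono (ENNReal.rpow_ne_top_of_nonneg h2s.le hL1ne) hholder
  by_cases hB0 : B = 0
  · -- then L2 = 0, so a.e. P^s Q^(1-s) = 0, so L1 = 0, A = 0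
    have hL20 : L2 = 0 := by
      rw [hB] at hB0
      exact (ENNReal.toReal_eq_zero_iff _).mp hB0 |>.resolve_right hL2ne
    have hae : ∀ᵐ ω ∂μ, P ω ^ s * Q ω ^ (1 - s) = 0 := by
      have := (lintegral_eq_zero_iff
        ((hPm.pow_const _).mul (hQm.pow_const _))).mp hL20
      filter_upwards [this] with ω hω
      exact hω
    have hL10 : L1 = 0 := by
      rw [hL1, lintegral_eq_zero_iff (f := fun ω => P ω ^ (1/2 : ℝ) * Q ω ^ (1/2 : ℝ)) ((hPm.pow_const _).mul (hQm.pow_const _))]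
      filter_upwards [hae] with ω hω
      show P ω ^ (1/2 : ℝ) * Q ω ^ (1/2 : ℝ) = 0
      rcases mul_eq_zero.mp hω with h | h
      · rw [ENNReal.rpow_eq_zero_iff] at h
        rcases h with ⟨h, _⟩ | ⟨_, h⟩
        · simp [h]
        · linarith
      · rw [ENNReal.rpow_eq_zero_iff] at h
        rcases h with ⟨h, _⟩ | ⟨_, h⟩
        · simp [h]
        · linarith
    have hA0 : A = 0 := by rw [hA, hL10]; simp
    rw [hA0, hB0, Real.log_zero]
    simp
  · have hBpos : 0 < B := lt_of_le_of_ne ENNReal.toReal_nonneg (Ne.symm hB0)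
    have hApos : 0 < A := by
      by_contra h
      push_neg at h
      have : A = 0 := le_antisymm h ENNReal.toReal_nonneg
      rw [this] at hBA
      rw [Real.zero_rpow h2s.ne'] at hBA
      linarith
    have hlog : Real.log B ≤ 2 * s * Real.log A := by
      calc Real.log B ≤ Real.log (A ^ (2 * s)) := Real.log_le_log hBpos hBA
        _ = 2 * s * Real.log A := Real.log_rpow hApos _
    linarith
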